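/- Fix a real α > 1 and define G(λ) = (2/sinh(2λ))·(α + coth(2λ)), the analytic continuation of the derivative of the phase function g(λ) = i·(α·p(λ) + cos(p(λ))). Then for every real x: −Im G(x + iπ/4) = 2·(α + tanh(2x))/cosh(2x) > 0 and −Im G(x − iπ/4) = −2·(α + tanh(2x))/cosh(2x) < 0. Consequently the y-derivative ∂_y Re g(x + iy) is strictly positive on the line y = π/4 and strictly negative on the line y = −π/4. -/

import Mathlib

open Complex Real

/-- The momentum function of the XX chain: `p(λ) = -i Log(-i tanh λ)`. -/
noncomputable def momentum (l : ℂ) : ℂ := -Complex.I * Complex.log (-Complex.I * Complex.tanh l)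

/-- The phase function `g(λ) = i (α p(λ) + cos(p(λ)))` of the wave factors. -/
noncomputable def phase (α : ℝ) (l : ℂ) : ℂ :=
  Complex.I * ((α : ℂ) * momentum l + Complex.cos (momentum l))

/-- The analytic continuation of the derivative of the phase function:
`G(λ) = (2/sinh(2λ)) (α + coth(2λ))`. -/
noncomputable def phaseDeriv (α : ℝ) (l : ℂ) : ℂ :=
  (2 / Complex.sinh (2 * l)) * ((α : ℂ) + Complex.cosh (2 * l) / Complex.sinh (2 * l))

/-- Auxiliary holomorphic function whose real part agrees with that of `phase α`. -/
noncomputable def auxG (α : ℝ) (l : ℂ) : ℂ :=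
  (α:ℂ) * Complex.log (Complex.tanh l) + (Complex.tanh l - (Complex.tanh l)⁻¹) / 2

lemma sinh_line (x y : ℝ) : Complex.sinh ((x:ℂ) + Complex.I*y)
    = ((Real.sinh x * Real.cos y : ℝ) : ℂ) + ((Real.cosh x * Real.sin y : ℝ):ℂ) * Complex.I := by
  rw [show (x:ℂ) + Complex.I*y = (x:ℂ) + (y:ℂ)*Complex.I by ring, Complex.sinh_add,
    Complex.sinh_mul_I, Complex.cosh_mul_I]
  push_cast; ring

lemma cosh_line (x y : ℝ) : Complex.cosh ((x:ℂ) + Complex.I*y)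
    = ((Real.cosh x * Real.cos y : ℝ) : ℂ) + ((Real.sinh x * Real.sin y : ℝ):ℂ) * Complex.I := by
  rw [show (x:ℂ) + Complex.I*y = (x:ℂ) + (y:ℂ)*Complex.I by ring, Complex.cosh_add,
    Complex.sinh_mul_I, Complex.cosh_mul_I]
  push_cast; ring

lemma line_props (x y : ℝ) (hs : Real.sin y ≠ 0) (hc : Real.cos y ≠ 0) :
    Complex.sinh ((x:ℂ) + Complex.I*y) ≠ 0 ∧ Complex.cosh ((x:ℂ) + Complex.I*y) ≠ 0 ∧
    (Complex.tanh ((x:ℂ) + Complex.I*y)).im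
      = Real.sin y * Real.cos y / Complex.normSq (Complex.cosh ((x:ℂ)+Complex.I*y)) := by
  have hch := Real.cosh_pos x
  have h1 : Complex.sinh ((x:ℂ) + Complex.I*y) ≠ 0 := by
    intro h
    have := congrArg Complex.im h
    rw [sinh_line] at this
    simp at this
    rcases this with h' | h'
    · exact (ne_of_gt hch) h'
    · exact hs h'
  have h2 : Complex.cosh ((x:ℂ) + Complex.I*y) ≠ 0 := by
    intro h
    have := congrArg Complex.re h
    rw [cosh_line] at this
    simp at this
    rcases this with h' | h'
    · exact (ne_of_gt hch) h'
    · exact hc h'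
  refine ⟨h1, h2, ?_⟩
  rw [Complex.tanh_eq_sinh_div_cosh, Complex.div_im, sinh_line, cosh_line]
  have hid := Real.cosh_sq_sub_sinh_sq x
  simp only [Complex.add_re, Complex.add_im, Complex.ofReal_re, Complex.ofReal_im,
    Complex.mul_re, Complex.mul_im, Complex.I_re, Complex.I_im]
  rw [div_sub_div_same]
  congr 1
  linear_combination Real.sin y * Real.cos y * hid

lemma re_phase_eq (α : ℝ) (l : ℂ) (h1 : Complex.sinh l ≠ 0) (h2 : Complex.cosh l ≠ 0) :
    (phase α l).re = (auxG α l).re := by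
  have ht : Complex.tanh l ≠ 0 := by
    rw [Complex.tanh_eq_sinh_div_cosh]; exact div_ne_zero h1 h2
  set w : ℂ := -Complex.I * Complex.tanh l with hw_def
  have hw : w ≠ 0 := mul_ne_zero (by simp) ht
  have hcos : Complex.cos (momentum l) = (w + w⁻¹) / 2 := by
    rw [← Complex.cosh_mul_I]
    have : momentum l * Complex.I = Complex.log w := by
      rw [momentum]; ring_nf; simp [Complex.I_sq]; rw [hw_def, neg_mul]
    rw [this, Complex.cosh, Complex.exp_log hw, Complex.exp_neg, Complex.exp_log hw]
  have hwinv : w⁻¹ = Complex.I * (Complex.tanh l)⁻¹ := by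
    rw [hw_def, mul_inv, inv_neg, Complex.inv_I, neg_neg]
  have habs : ‖w‖ = ‖Complex.tanh l‖ := by
    rw [hw_def]; simp
  have hpim : (momentum l).im = -Real.log ‖Complex.tanh l‖ := by
    rw [momentum]
    simp [Complex.mul_im, Complex.log_re, ← hw_def, habs]
  rw [phase, hcos, hwinv, auxG, Complex.I_mul_re, Complex.add_im, Complex.im_ofReal_mul,
    Complex.add_re, Complex.re_ofReal_mul, Complex.log_re, hpim, hw_def]
  simp [Complex.div_im, Complex.div_re, Complex.add_im, Complex.sub_re, Complex.mul_im,
    Complex.normSq]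
  ring

lemma aux_alg (a s c : ℂ) (hs : s ≠ 0) (hc : c ≠ 0) :
    2/(2*s*c) * (a + (c^2+s^2)/(2*s*c)) = a * (1/c^2/(s/c)) + (1/c^2 - -(1/c^2)/(s/c)^2)/2 := by
  have hsc : s*c ≠ 0 := mul_ne_zero hs hc
  have hc2 : c^2 ≠ 0 := pow_ne_zero 2 hc
  have hs2 : s^2 ≠ 0 := pow_ne_zero 2 hs
  have e1 : 1 / c ^ 2 / (s / c) = 1 / (s * c) := by field_simp
  have e2 : -(1 / c ^ 2) / (s / c) ^ 2 = -(1 / s ^ 2) := by field_simp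
  rw [e1, e2]
  have L : 2/(2*s*c) * (a + (c^2+s^2)/(2*s*c)) = (2*a*s*c + c^2 + s^2)/(2*s^2*c^2) := by
    field_simp
    ring
  have X : 1/c^2 - -(1/s^2) = (c^2+s^2)/(c^2*s^2) := by
    rw [sub_neg_eq_add, div_add_div _ _ hc2 hs2]
    ring_nf
  have R : a * (1/(s*c)) + ((c^2+s^2)/(c^2*s^2))/2 = (2*a*s*c + c^2 + s^2)/(2*s^2*c^2) := by
    rw [mul_one_div, div_div, div_add_div _ _ hsc (by simp [hc2, hs2] : c^2*s^2*2 ≠ 0),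
      div_eq_div_iff (by simp [hs, hc] : s*c*(c^2*s^2*2) ≠ 0) (by simp [hs2, hc2] : 2*s^2*c^2 ≠ 0)]
    ring
  rw [L, X, R]

lemma hasDerivAt_auxG (α : ℝ) (l : ℂ) (h1 : Complex.sinh l ≠ 0) (h2 : Complex.cosh l ≠ 0)
    (h3 : Complex.tanh l ∈ Complex.slitPlane) :
    HasDerivAt (auxG α) (phaseDeriv α l) l := by
  have ht : Complex.tanh l ≠ 0 := by
    rw [Complex.tanh_eq_sinh_div_cosh]; exact div_ne_zero h1 h2
  have htanh : HasDerivAt Complex.tanh (1 / Complex.cosh l ^ 2) l := by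
    have h := (Complex.hasDerivAt_sinh l).div (Complex.hasDerivAt_cosh l) h2
    have e : (Complex.cosh l * Complex.cosh l - Complex.sinh l * Complex.sinh l)
        / Complex.cosh l ^ 2 = 1 / Complex.cosh l ^ 2 := by
      rw [← Complex.cosh_sq_sub_sinh_sq l]; ring
    rw [e] at h
    exact h.congr_of_eventuallyEq
      (Filter.Eventually.of_forall fun z => (Complex.tanh_eq_sinh_div_cosh z))
  have hlog := htanh.clog h3
  have hinv := htanh.inv ht
  have hsum := ((hlog.const_mul (α:ℂ)).add ((htanh.sub hinv).div_const 2))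
  have he : auxG α = fun z => (α:ℂ) * Complex.log (Complex.tanh z)
      + (Complex.tanh z - (Complex.tanh z)⁻¹) / 2 := rfl
  rw [he]
  convert hsum using 1
  · rfl
  · rfl
  · rfl
  rw [Complex.tanh_eq_sinh_div_cosh, phaseDeriv, Complex.sinh_two_mul, Complex.cosh_two_mul]
  exact aux_alg _ _ _ h1 h2

lemma valim (a C S : ℝ) (hC : C ≠ 0) :
    ((2/((C:ℂ)*Complex.I)) * ((a:ℂ) + ((S:ℂ)*Complex.I)/((C:ℂ)*Complex.I))).im
      = -(2*(a + S/C)/C) := by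
  have hC' : (C:ℂ) ≠ 0 := by exact_mod_cast hC
  have hCI : (C:ℂ)*Complex.I ≠ 0 := mul_ne_zero hC' Complex.I_ne_zero
  have key : (2/((C:ℂ)*Complex.I)) * ((a:ℂ) + ((S:ℂ)*Complex.I)/((C:ℂ)*Complex.I))
      = ((-(2*(a + S/C)/C) : ℝ) : ℂ) * Complex.I := by
    rw [mul_div_mul_right _ _ Complex.I_ne_zero, div_mul_eq_mul_div, div_eq_iff hCI]
    push_cast
    field_simp
    ring_nf
    simp [Complex.I_sq]
  rw [key]
  simp

lemma sc_eval (x : ℝ) :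
    (Complex.sinh (2 * ((x:ℂ) + Complex.I * (π/4))) = (Real.cosh (2*x) : ℂ) * Complex.I ∧
     Complex.cosh (2 * ((x:ℂ) + Complex.I * (π/4))) = (Real.sinh (2*x) : ℂ) * Complex.I) ∧
    (Complex.sinh (2 * ((x:ℂ) - Complex.I * (π/4))) = ((-Real.cosh (2*x) : ℝ) : ℂ) * Complex.I ∧
     Complex.cosh (2 * ((x:ℂ) - Complex.I * (π/4))) = ((-Real.sinh (2*x) : ℝ) : ℂ) * Complex.I) := by
  have e1 : 2 * ((x:ℂ) + Complex.I * (π/4)) = ((2*x : ℝ):ℂ) + ((π/2 : ℝ):ℂ) * Complex.I := by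
    push_cast; ring
  have e2 : 2 * ((x:ℂ) - Complex.I * (π/4)) = ((2*x : ℝ):ℂ) + ((-(π/2) : ℝ):ℂ) * Complex.I := by
    push_cast; ring
  rw [e1, e2, Complex.sinh_add, Complex.cosh_add, Complex.sinh_add, Complex.cosh_add,
    Complex.sinh_mul_I, Complex.cosh_mul_I, Complex.sinh_mul_I, Complex.cosh_mul_I,
    ← Complex.ofReal_sinh, ← Complex.ofReal_cosh, ← Complex.ofReal_cos, ← Complex.ofReal_sin,
    ← Complex.ofReal_cos, ← Complex.ofReal_sin]
  simp [Real.cos_pi_div_two, Real.sin_pi_div_two]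

lemma hasDerivAt_rePhase (α x y : ℝ) (hs : Real.sin y ≠ 0) (hc : Real.cos y ≠ 0) :
    HasDerivAt (fun t : ℝ => (phase α ((x : ℂ) + Complex.I * (t : ℂ))).re)
      (-(phaseDeriv α ((x:ℂ) + Complex.I * (y:ℂ))).im) y := by
  obtain ⟨h1, h2, h3⟩ := line_props x y hs hc
  have hslit : Complex.tanh ((x:ℂ) + Complex.I*y) ∈ Complex.slitPlane := by
    rw [Complex.mem_slitPlane_iff]
    right
    rw [h3]
    exact div_ne_zero (mul_ne_zero hs hc) (ne_of_gt (Complex.normSq_pos.2 h2))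
  have hG := hasDerivAt_auxG α _ h1 h2 hslit
  have hline : HasDerivAt (fun z : ℂ => (x:ℂ) + Complex.I*z) Complex.I (y:ℂ) := by
    simpa using ((hasDerivAt_id (y:ℂ)).const_mul Complex.I).const_add (x:ℂ)
  have hcomp := hG.comp (y:ℂ) hline
  have hre := hcomp.real_of_complex
  have hval : ((phaseDeriv α ((x:ℂ) + Complex.I * (y:ℂ)) * Complex.I)).re
      = -(phaseDeriv α ((x:ℂ) + Complex.I * (y:ℂ))).im := Complex.mul_I_re _
  rw [hval] at hre
  refine hre.congr_of_eventuallyEq ?_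
  have hev : ∀ᶠ t in nhds y, Real.sin t ≠ 0 ∧ Real.cos t ≠ 0 :=
    (Real.continuous_sin.continuousAt.eventually_ne hs).and
      (Real.continuous_cos.continuousAt.eventually_ne hc)
  filter_upwards [hev] with t ⟨hst, hct⟩
  obtain ⟨h1', h2', _⟩ := line_props x t hst hct
  exact re_phase_eq α _ h1' h2'

theorem im_phaseDeriv_on_lines (α : ℝ) (hα : 1 < α) (x : ℝ) :
    -(phaseDeriv α (x + Complex.I * (π / 4))).im
        = 2 * (α + Real.tanh (2 * x)) / Real.cosh (2 * x) ∧
    0 < 2 * (α + Real.tanh (2 * x)) / Real.cosh (2 * x) ∧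
    -(phaseDeriv α (x - Complex.I * (π / 4))).im
        = -(2 * (α + Real.tanh (2 * x)) / Real.cosh (2 * x)) ∧
    -(2 * (α + Real.tanh (2 * x)) / Real.cosh (2 * x)) < 0 ∧
    HasDerivAt (fun y : ℝ => (phase α ((x : ℂ) + Complex.I * (y : ℂ))).re)
      (2 * (α + Real.tanh (2 * x)) / Real.cosh (2 * x)) (π / 4) ∧
    HasDerivAt (fun y : ℝ => (phase α ((x : ℂ) + Complex.I * (y : ℂ))).re)
      (-(2 * (α + Real.tanh (2 * x)) / Real.cosh (2 * x))) (-(π / 4)) := by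
  have hcosh := Real.cosh_pos (2*x)
  have hcosh' : Real.cosh (2*x) ≠ 0 := ne_of_gt hcosh
  obtain ⟨⟨hsp, hcp⟩, ⟨hsm, hcm⟩⟩ := sc_eval x
  -- value at the plus line
  have himP : -(phaseDeriv α ((x:ℂ) + Complex.I * (π / 4))).im
      = 2 * (α + Real.tanh (2 * x)) / Real.cosh (2 * x) := by
    rw [phaseDeriv, hsp, hcp, valim α _ _ hcosh', Real.tanh_eq_sinh_div_cosh]
    field_simp
  have himM : -(phaseDeriv α ((x:ℂ) - Complex.I * (π / 4))).im
      = -(2 * (α + Real.tanh (2 * x)) / Real.cosh (2 * x)) := by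
    rw [phaseDeriv, hsm, hcm, valim α _ _ (by simpa using hcosh'), Real.tanh_eq_sinh_div_cosh]
    rw [neg_div_neg_eq]
    field_simp
  -- positivity
  have hpos : 0 < 2 * (α + Real.tanh (2 * x)) / Real.cosh (2 * x) := by
    apply div_pos _ hcosh
    have h1 : Real.cosh (2*x) + Real.sinh (2*x) = Real.exp (2*x) := Real.cosh_add_sinh (2*x)
    have h2 := Real.exp_pos (2*x)
    rw [Real.tanh_eq_sinh_div_cosh]
    have h3 : -1 < Real.sinh (2*x) / Real.cosh (2*x) := by
      rw [neg_lt, ← neg_div, div_lt_one hcosh]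
      nlinarith
    nlinarith
  -- trig nonvanishing at ±π/4
  have hsin4 : Real.sin (π/4) ≠ 0 := by
    rw [Real.sin_pi_div_four]; positivity
  have hcos4 : Real.cos (π/4) ≠ 0 := by
    rw [Real.cos_pi_div_four]; positivity
  have hsin4' : Real.sin (-(π/4)) ≠ 0 := by
    rw [Real.sin_neg]; simp [Real.sin_pi_div_four]
  have hcos4' : Real.cos (-(π/4)) ≠ 0 := by
    rw [Real.cos_neg]; exact hcos4
  -- derivatives
  have hdP := hasDerivAt_rePhase α x (π/4) hsin4 hcos4
  have hdM := hasDerivAt_rePhase α x (-(π/4)) hsin4' hcos4'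
  have hpointP : (x:ℂ) + Complex.I * ((π/4 : ℝ):ℂ) = (x:ℂ) + Complex.I * (π / 4) := by
    push_cast; ring
  have hpointM : (x:ℂ) + Complex.I * ((-(π/4) : ℝ):ℂ) = (x:ℂ) - Complex.I * (π / 4) := by
    push_cast; ring
  rw [hpointP, himP] at hdP
  rw [hpointM, himM] at hdM
  exact ⟨himP, hpos, himM, by linarith, hdP, hdM⟩
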